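/- For every tree T of order n ≥ 3 that is not isomorphic to the double star S_{2,2}, γ_{rI}(T) ≥ (n+3)/2. -/

import Mathlib

open scoped Classical
open Finset

/-- A restrained Italian dominating function: values in {0,1,2}, every 0-vertex has
neighborhood weight ≥ 2, and every 0-vertex has a 0-neighbor. -/
def IsRIDF {V : Type*} [Fintype V] (G : SimpleGraph V) (f : V → ℕ) : Prop :=
  (∀ v, f v ≤ 2) ∧
  (∀ v, f v = 0 → 2 ≤ ∑ u ∈ Finset.univ.filter (fun u => G.Adj v u), f u) ∧
  (∀ v, f v = 0 → ∃ u, G.Adj v u ∧ f u = 0)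

/-- The restrained Italian domination number. -/
noncomputable def ridNum {V : Type*} [Fintype V] (G : SimpleGraph V) : ℕ :=
  sInf {w | ∃ f : V → ℕ, IsRIDF G f ∧ ∑ v, f v = w}

/-- A restrained dominating set. -/
def IsRDS {V : Type*} [Fintype V] (G : SimpleGraph V) (S : Finset V) : Prop :=
  (∀ v ∉ S, ∃ u ∈ S, G.Adj v u) ∧ (∀ v ∉ S, ∃ u ∉ S, G.Adj v u)

/-- The restrained domination number. -/
noncomputable def rdNum {V : Type*} [Fintype V] (G : SimpleGraph V) : ℕ :=
  sInf {k | ∃ S : Finset V, IsRDS G S ∧ S.card = k}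

/-- The double star `S_{2,2}`: centers 0,1; leaves 2,3 at 0 and 4,5 at 1. -/
def doubleStar22 : SimpleGraph (Fin 6) :=
  SimpleGraph.fromRel (fun a b =>
    (a = 0 ∧ b = 1) ∨ (a = 0 ∧ b = 2) ∨ (a = 0 ∧ b = 3) ∨ (a = 1 ∧ b = 4) ∨ (a = 1 ∧ b = 5))

namespace RIDaux



variable {V : Type*}

lemma isPath_concat {G : SimpleGraph V} {u v w : V} {p : G.Walk u v} (hp : p.IsPath)
    (h : G.Adj v w) (hw : w ∉ p.support) : (p.concat h).IsPath := by
  rw [SimpleGraph.Walk.isPath_def, SimpleGraph.Walk.support_concat]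
  rw [SimpleGraph.Walk.isPath_def] at hp
  simpa [List.concat_eq_append, List.nodup_append] using ⟨hp, fun a ha h => hw (h ▸ ha)⟩

lemma mem_support_dist_le {G : SimpleGraph V} {r u v : V} {p : G.Walk r u}
    (hv : v ∈ p.support) : G.dist r v ≤ p.length := by
  calc G.dist r v ≤ (p.takeUntil v hv).length := SimpleGraph.dist_le _
    _ ≤ p.length := SimpleGraph.Walk.length_takeUntil_le _ _

/-- In a tree, adjacent vertices have different distances from any root. -/
lemma dist_ne_of_adj {G : SimpleGraph V} (hG : G.IsTree) {r u v : V} (huv : G.Adj u v) :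
    G.dist r u ≠ G.dist r v := by
  intro hEq
  obtain ⟨p, hp, hpl⟩ := hG.isConnected.exists_path_of_dist r u
  have hvs : v ∉ p.support := by
    intro hv
    have h1 : G.dist r v ≤ (p.takeUntil v hv).length := SimpleGraph.dist_le _
    have h2 : (p.takeUntil v hv).length + (p.dropUntil v hv).length = p.length := by
      have := congrArg SimpleGraph.Walk.length (p.take_spec hv)
      rwa [SimpleGraph.Walk.length_append] at this
    have h3 : (p.dropUntil v hv).length ≠ 0 := by
      intro h0
      have := SimpleGraph.Walk.eq_of_length_eq_zero h0
      exact huv.ne' this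
    omega
  have hq : (p.concat huv).IsPath := isPath_concat hp huv hvs
  obtain ⟨q0, hq0, hq0l⟩ := hG.isConnected.exists_path_of_dist r v
  have := (hG.existsUnique_path r v).unique hq hq0
  have hlen := congrArg SimpleGraph.Walk.length this
  rw [SimpleGraph.Walk.length_concat] at hlen
  omega

lemma unique_parent {G : SimpleGraph V} (hG : G.IsTree) {r u u' v : V}
    (hu : G.Adj u v) (hu' : G.Adj u' v) (h1 : G.dist r u < G.dist r v)
    (h2 : G.dist r u' < G.dist r v) : u = u' := by
  have hdu : G.dist r v ≤ G.dist r u + 1 := by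
    calc G.dist r v ≤ G.dist r u + G.dist u v := hG.isConnected.dist_triangle
      _ = G.dist r u + 1 := by rw [SimpleGraph.dist_eq_one_iff_adj.2 hu]
  have hdu' : G.dist r v ≤ G.dist r u' + 1 := by
    calc G.dist r v ≤ G.dist r u' + G.dist u' v := hG.isConnected.dist_triangle
      _ = G.dist r u' + 1 := by rw [SimpleGraph.dist_eq_one_iff_adj.2 hu']
  obtain ⟨p, hp, hpl⟩ := hG.isConnected.exists_path_of_dist r u
  obtain ⟨p', hp', hpl'⟩ := hG.isConnected.exists_path_of_dist r u'
  have hvs : v ∉ p.support := fun hv => by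
    have := mem_support_dist_le (G := G) hv; omega
  have hvs' : v ∉ p'.support := fun hv => by
    have := mem_support_dist_le (G := G) hv; omega
  have hq : (p.concat hu).IsPath := isPath_concat hp hu hvs
  have hq' : (p'.concat hu').IsPath := isPath_concat hp' hu' hvs'
  have heq := (hG.existsUnique_path r v).unique hq hq'
  obtain ⟨hv, -⟩ := SimpleGraph.Walk.concat_inj heq
  exact hv



lemma tree_pair_bound {V : Type*} [Fintype V] {G : SimpleGraph V} (hG : G.IsTree)
    (P : V → V → Prop) (S : Finset V) (hS : S.Nonempty)
    (hP : ∀ u v, P u v → G.Adj u v ∧ u ∈ S ∧ v ∈ S) :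
    ((univ ×ˢ univ).filter fun z : V × V => P z.1 z.2).card + 2 ≤ 2 * S.card := by
  classical
  obtain ⟨r, hr⟩ := hS
  set F : V × V → V := fun z => if G.dist r z.1 < G.dist r z.2 then z.2 else z.1 with hF
  have hmaps : ∀ z ∈ (univ ×ˢ univ).filter fun z : V × V => P z.1 z.2, F z ∈ S.erase r := by
    rintro ⟨x, y⟩ hz
    simp only [mem_filter] at hz
    obtain ⟨hadj, hxS, hyS⟩ := hP _ _ hz.2
    have hne := dist_ne_of_adj hG (r := r) hadj
    simp only [hF, Finset.mem_erase]
    by_cases h : G.dist r x < G.dist r y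
    · simp only [if_pos h]
      refine ⟨?_, hyS⟩
      intro h0; subst h0
      simp [SimpleGraph.dist_self] at h
    · simp only [if_neg h]
      refine ⟨?_, hxS⟩
      intro h0; subst h0
      simp only [SimpleGraph.dist_self] at hne h
      omega
  have hfib : ∀ w ∈ S.erase r,
      (((univ ×ˢ univ).filter fun z : V × V => P z.1 z.2).filter fun z => F z = w).card ≤ 2 := by
    intro w _
    set A := ((univ ×ˢ univ).filter fun z : V × V => P z.1 z.2).filter fun z => F z = w with hA
    rcases A.eq_empty_or_nonempty with hAe | ⟨⟨x0, y0⟩, hz0⟩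
    · simp [hAe]
    · -- the "near" endpoint of z0
      have hmemA : ∀ x y, (x, y) ∈ A → G.Adj x y ∧ G.dist r x ≠ G.dist r y ∧
          ((G.dist r x < G.dist r y ∧ y = w) ∨ (G.dist r y < G.dist r x ∧ x = w)) := by
        intro x y hxy
        simp only [hA, mem_filter] at hxy
        obtain ⟨⟨-, hPxy⟩, hFxy⟩ := hxy
        have hadj := (hP _ _ hPxy).1
        have hne := dist_ne_of_adj hG (r := r) hadj
        refine ⟨hadj, hne, ?_⟩
        by_cases h : G.dist r x < G.dist r y
        · left; refine ⟨h, ?_⟩; simpa [hF, if_pos h] using hFxy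
        · right
          refine ⟨by omega, ?_⟩
          simpa [hF, if_neg h] using hFxy
      obtain ⟨hadj0, hne0, hc0⟩ := hmemA _ _ hz0
      set q : V := if G.dist r x0 < G.dist r y0 then x0 else y0 with hq
      have hqprop : G.Adj q w ∧ G.dist r q < G.dist r w := by
        rcases hc0 with ⟨h, rfl⟩ | ⟨h, rfl⟩
        · simp only [hq, if_pos h]; exact ⟨hadj0, h⟩
        · have : ¬ G.dist r x0 < G.dist r y0 := by omega
          simp only [hq, if_neg this]
          exact ⟨hadj0.symm, h⟩
      have hsub : A ⊆ {(q, w), (w, q)} := by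
        rintro ⟨x, y⟩ hxy
        obtain ⟨hadj, hne, hc⟩ := hmemA _ _ hxy
        simp only [Finset.mem_insert, Finset.mem_singleton, Prod.mk.injEq]
        rcases hc with ⟨h, rfl⟩ | ⟨h, rfl⟩
        · left
          exact ⟨unique_parent hG hadj hqprop.1 h hqprop.2, rfl⟩
        · right
          exact ⟨rfl, unique_parent hG hadj.symm hqprop.1 h hqprop.2⟩
      calc A.card ≤ ({(q, w), (w, q)} : Finset (V × V)).card := Finset.card_le_card hsub
        _ ≤ 2 := Finset.card_insert_le _ _ |>.trans (by simp)
  have := Finset.card_le_mul_card_image_of_maps_to hmaps 2 hfib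
  have hcard : (S.erase r).card = S.card - 1 := Finset.card_erase_of_mem hr
  have hS1 : 1 ≤ S.card := Finset.card_pos.2 ⟨r, hr⟩
  omega



lemma card_pairs_eq_sum {V : Type*} [Fintype V] (P : V → V → Prop) :
    ((univ ×ˢ univ).filter fun z : V × V => P z.1 z.2).card
      = ∑ v : V, (univ.filter fun u => P v u).card := by
  classical
  rw [Finset.card_eq_sum_card_fiberwise (f := Prod.fst) (t := univ) (fun z _ => mem_univ _)]
  refine Finset.sum_congr rfl fun v _ => ?_
  refine Finset.card_bij (fun z _ => z.2) ?_ ?_ ?_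
  · rintro ⟨x, y⟩ hz
    simp only [mem_filter, mem_product] at hz ⊢
    exact ⟨mem_univ _, hz.2 ▸ hz.1.2⟩
  · rintro ⟨x, y⟩ hz ⟨x', y'⟩ hz' h
    simp only [mem_filter] at hz hz'
    simp only at h
    exact Prod.ext (hz.2.trans hz'.2.symm) h
  · intro u hu
    simp only [mem_filter] at hu
    exact ⟨(v, u), by simp [hu.2], rfl⟩

lemma sum_swap_adj {V : Type*} [Fintype V] (G : SimpleGraph V) (p q : V → Prop) :
    ∑ v ∈ univ.filter p, (univ.filter fun u => G.Adj v u ∧ q u).card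
      = ∑ v ∈ univ.filter q, (univ.filter fun u => G.Adj v u ∧ p u).card := by
  classical
  have h : ∀ (p q : V → Prop),
      ∑ v ∈ univ.filter p, (univ.filter fun u => G.Adj v u ∧ q u).card
        = ∑ v : V, ∑ u : V, if p v ∧ G.Adj v u ∧ q u then 1 else 0 := by
    intro p q
    rw [Finset.sum_filter]
    refine Finset.sum_congr rfl fun v _ => ?_
    rw [Finset.card_filter]
    by_cases hv : p v
    · simp [hv]
    · simp [hv]
  rw [h, h, Finset.sum_comm]
  refine Finset.sum_congr rfl fun v _ => Finset.sum_congr rfl fun u _ => ?_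
  refine if_congr ?_ rfl rfl
  constructor
  · rintro ⟨h1, h2, h3⟩; exact ⟨h3, h2.symm, h1⟩
  · rintro ⟨h1, h2, h3⟩; exact ⟨h3, h2.symm, h1⟩

lemma sum_partition {V : Type*} [Fintype V] (f : V → ℕ) (hf : ∀ v, f v ≤ 2) (g : V → ℕ) :
    ∑ v : V, g v = (∑ v ∈ univ.filter fun v => f v = 0, g v)
      + (∑ v ∈ univ.filter fun v => f v = 1, g v)
      + (∑ v ∈ univ.filter fun v => f v = 2, g v) := by
  classical
  rw [← Finset.sum_filter_add_sum_filter_not univ (fun v => f v = 0) g,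
    ← Finset.sum_filter_add_sum_filter_not (univ.filter fun v => ¬ f v = 0)
      (fun v => f v = 1) g, Finset.filter_filter, Finset.filter_filter]
  have h1 : (univ.filter fun v => ¬ f v = 0 ∧ f v = 1) = univ.filter fun v => f v = 1 := by
    apply Finset.filter_congr; intro v _; have := hf v; constructor <;> intro h <;> omega
  have h2 : (univ.filter fun v => ¬ f v = 0 ∧ ¬ f v = 1) = univ.filter fun v => f v = 2 := by
    apply Finset.filter_congr; intro v _; have := hf v; constructor <;> intro h <;> omega
  rw [h1, h2, add_assoc]



-- generalized partition over an arbitrary finset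
lemma sum_partition' {V : Type*} [Fintype V] (s : Finset V) (f : V → ℕ) (hf : ∀ v, f v ≤ 2)
    (g : V → ℕ) :
    ∑ v ∈ s, g v = (∑ v ∈ s.filter fun v => f v = 0, g v)
      + (∑ v ∈ s.filter fun v => f v = 1, g v)
      + (∑ v ∈ s.filter fun v => f v = 2, g v) := by
  classical
  rw [← Finset.sum_filter_add_sum_filter_not s (fun v => f v = 0) g,
    ← Finset.sum_filter_add_sum_filter_not (s.filter fun v => ¬ f v = 0)
      (fun v => f v = 1) g, Finset.filter_filter, Finset.filter_filter]
  have h1 : (s.filter fun v => ¬ f v = 0 ∧ f v = 1) = s.filter fun v => f v = 1 := by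
    apply Finset.filter_congr; intro v _; have := hf v; constructor <;> intro h <;> omega
  have h2 : (s.filter fun v => ¬ f v = 0 ∧ ¬ f v = 1) = s.filter fun v => f v = 2 := by
    apply Finset.filter_congr; intro v _; have := hf v; constructor <;> intro h <;> omega
  rw [h1, h2, add_assoc]


variable {V : Type*} [Fintype V]

/-- Main counting lemma: either the weight is large, or we are in the tight
configuration (a=2, b=4, c=0 with the precise degrees). -/
theorem main_count {T : SimpleGraph V} (hT : T.IsTree) (hn : 3 ≤ Fintype.card V)
    (f : V → ℕ) (hf : IsRIDF T f)
    (htight : ¬ (Fintype.card V + 3 ≤ 2 * ∑ v, f v)) :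
    ((univ.filter fun v => f v = 0).card = 2 ∧ (univ.filter fun v => f v = 1).card = 4 ∧
      (univ.filter fun v => f v = 2).card = 0) := by
  classical
  obtain ⟨hf2, hfdom, hfres⟩ := hf
  set V0 := univ.filter fun v => f v = 0 with hV0
  set V1 := univ.filter fun v => f v = 1 with hV1
  set V2 := univ.filter fun v => f v = 2 with hV2
  set a := V0.card with ha
  set b := V1.card with hb
  set c := V2.card with hc
  set n := Fintype.card V with hn'
  -- cardinality partition
  have habc : a + b + c = n := by
    have h := sum_partition' (univ : Finset V) f hf2 (fun _ => 1)
    simp only [Finset.sum_const, smul_eq_mul, mul_one, Finset.card_univ] at h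
    rw [hn', h]
  -- weight
  have hw : ∑ v, f v = b + 2 * c := by
    have h := sum_partition' (univ : Finset V) f hf2 f
    have h0 : ∑ v ∈ V0, f v = 0 := by
      apply Finset.sum_eq_zero; intro v hv; exact (Finset.mem_filter.1 hv).2
    have h1 : ∑ v ∈ V1, f v = b := by
      rw [hb, Finset.card_eq_sum_ones]
      exact Finset.sum_congr rfl fun v hv => (Finset.mem_filter.1 hv).2
    have h2 : ∑ v ∈ V2, f v = 2 * c := by
      have : ∑ v ∈ V2, f v = ∑ _v ∈ V2, 2 :=
        Finset.sum_congr rfl fun v hv => (Finset.mem_filter.1 hv).2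
      rw [this, Finset.sum_const, smul_eq_mul, mul_comm]
    rw [h, h0, h1, h2]; ring
  -- neighbor counts
  set n0 : V → ℕ := fun v => (univ.filter fun u => T.Adj v u ∧ f u = 0).card with hn0d
  set n1 : V → ℕ := fun v => (univ.filter fun u => T.Adj v u ∧ f u = 1).card with hn1d
  set n2 : V → ℕ := fun v => (univ.filter fun u => T.Adj v u ∧ f u = 2).card with hn2d
  have hdom : ∀ v ∈ V0, 2 ≤ n1 v + 2 * n2 v := by
    intro v hv
    have h2 := hfdom v (Finset.mem_filter.1 hv).2
    have hsplit := sum_partition' (univ.filter fun u => T.Adj v u) f hf2 f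
    rw [Finset.filter_filter, Finset.filter_filter, Finset.filter_filter] at hsplit
    have e0 : ∑ u ∈ univ.filter (fun u => T.Adj v u ∧ f u = 0), f u = 0 :=
      Finset.sum_eq_zero fun u hu => (Finset.mem_filter.1 hu).2.2
    have e1 : ∑ u ∈ univ.filter (fun u => T.Adj v u ∧ f u = 1), f u = n1 v := by
      rw [hn1d]; simp only
      rw [Finset.card_eq_sum_ones]
      exact Finset.sum_congr rfl fun u hu => (Finset.mem_filter.1 hu).2.2
    have e2 : ∑ u ∈ univ.filter (fun u => T.Adj v u ∧ f u = 2), f u = 2 * n2 v := by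
      have : ∑ u ∈ univ.filter (fun u => T.Adj v u ∧ f u = 2), f u
          = ∑ _u ∈ univ.filter (fun u => T.Adj v u ∧ f u = 2), 2 :=
        Finset.sum_congr rfl fun u hu => (Finset.mem_filter.1 hu).2.2
      rw [this, Finset.sum_const, smul_eq_mul, mul_comm]
    rw [hsplit, e0, e1, e2] at h2
    omega
  have hres : ∀ v ∈ V0, 1 ≤ n0 v := by
    intro v hv
    obtain ⟨u, hu, hu0⟩ := hfres v (Finset.mem_filter.1 hv).2
    have : u ∈ univ.filter fun u => T.Adj v u ∧ f u = 0 := by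
      simp only [Finset.mem_filter, Finset.mem_univ, true_and]; exact ⟨hu, hu0⟩
    rw [hn0d]
    exact Finset.card_pos.2 ⟨u, this⟩
  have hdegsplit : ∀ v, (univ.filter fun u => T.Adj v u).card = n0 v + n1 v + n2 v := by
    intro v
    have h := sum_partition' (univ.filter fun u => T.Adj v u) f hf2 (fun _ => 1)
    rw [Finset.filter_filter, Finset.filter_filter, Finset.filter_filter] at h
    simp only [Finset.sum_const, smul_eq_mul, mul_one] at h
    exact h
  have hedges : ∑ v, (univ.filter fun u => T.Adj v u).card = 2 * (n - 1) := by
    have h1 := card_pairs_eq_sum (fun v u => T.Adj v u)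
    have h2 := T.two_mul_card_edgeFinset
    have h3 := hT.card_edgeFinset
    have h4 : ((univ ×ˢ univ).filter fun z : V × V => T.Adj z.1 z.2).card
        = (univ.filter fun (x, y) => T.Adj x y).card := by
      rw [Finset.univ_product_univ]
    rw [← h1, h4, ← h2]
    omega
  set P00 := ∑ v ∈ V0, n0 v with hP00d
  set P01 := ∑ v ∈ V0, n1 v with hP01d
  set P02 := ∑ v ∈ V0, n2 v with hP02d
  have hsw1 : ∑ v ∈ V1, n0 v = P01 := by
    rw [hP01d, hV0, hV1, hn0d, hn1d]
    have h := sum_swap_adj T (fun v => f v = 1) (fun v => f v = 0)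
    convert h using 2 <;> congr!
  have hsw2 : ∑ v ∈ V2, n0 v = P02 := by
    rw [hP02d, hV0, hV2, hn0d, hn2d]
    have h := sum_swap_adj T (fun v => f v = 2) (fun v => f v = 0)
    convert h using 2 <;> congr!
  have hiii : P00 + 2 * P01 + 2 * P02 ≤ 2 * (n - 1) := by
    have hpart := sum_partition' (univ : Finset V) f hf2
      (fun v => (univ.filter fun u => T.Adj v u).card)
    rw [hedges] at hpart
    have e0 : ∑ v ∈ V0, (univ.filter fun u => T.Adj v u).card = P00 + P01 + P02 := by
      rw [hP00d, hP01d, hP02d, ← Finset.sum_add_distrib, ← Finset.sum_add_distrib]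
      exact Finset.sum_congr rfl fun v _ => hdegsplit v
    have e1 : P01 ≤ ∑ v ∈ V1, (univ.filter fun u => T.Adj v u).card := by
      rw [← hsw1]
      refine Finset.sum_le_sum fun v _ => ?_
      rw [hn0d]
      exact Finset.card_le_card (Finset.monotone_filter_right _ (fun u _ hu => hu.1))
    have e2 : P02 ≤ ∑ v ∈ V2, (univ.filter fun u => T.Adj v u).card := by
      rw [← hsw2]
      refine Finset.sum_le_sum fun v _ => ?_
      rw [hn0d]
      exact Finset.card_le_card (Finset.monotone_filter_right _ (fun u _ hu => hu.1))
    rw [← hV0, ← hV1, ← hV2] at hpart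
    rw [e0] at hpart
    omega
  have hi : 2 * a ≤ P01 + 2 * P02 := by
    calc 2 * a = ∑ _v ∈ V0, 2 := by rw [Finset.sum_const, smul_eq_mul, mul_comm]
      _ ≤ ∑ v ∈ V0, (n1 v + 2 * n2 v) := Finset.sum_le_sum hdom
      _ = P01 + 2 * P02 := by
          rw [Finset.sum_add_distrib, hP01d, hP02d, Finset.mul_sum]
  have hii : a ≤ P00 := by
    calc a = ∑ _v ∈ V0, 1 := by rw [Finset.sum_const, smul_eq_mul, mul_one]
      _ ≤ ∑ v ∈ V0, n0 v := Finset.sum_le_sum hres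
  have hP02z : c = 0 → P02 = 0 := by
    intro hc0
    rw [hP02d]
    refine Finset.sum_eq_zero fun v _ => ?_
    rw [hn2d]
    simp only [Finset.card_eq_zero]
    rw [Finset.filter_eq_empty_iff]
    intro u _
    rintro ⟨-, hu2⟩
    have : u ∈ V2 := by simp [hV2, hu2]
    rw [Finset.card_eq_zero.1 hc0.symm.symm] at this
    · simp at this
  have ha1 : a ≠ 1 := by
    intro ha'
    obtain ⟨v, hv⟩ := Finset.card_eq_one.1 ha'.symm.symm
    have hvV0 : v ∈ V0 := by rw [hv]; exact Finset.mem_singleton_self v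
    obtain ⟨u, huadj, hu0⟩ := hfres v (Finset.mem_filter.1 hvV0).2
    have : u ∈ V0 := by simp [hV0, hu0]
    rw [hv, Finset.mem_singleton] at this
    subst this
    exact T.irrefl huadj
  -- the forest bound for V0 ∪ V2, when c ≥ 1
  have hiv : 1 ≤ c → P00 + 2 * P02 + 2 ≤ 2 * (a + c) := by
    intro hc1
    set P : V → V → Prop := fun u v => T.Adj u v ∧
      ((f u = 0 ∧ f v = 0) ∨ (f u = 0 ∧ f v = 2) ∨ (f u = 2 ∧ f v = 0)) with hPdef
    set S : Finset V := univ.filter fun v => f v = 0 ∨ f v = 2 with hSdef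
    have hSeq : S = V0 ∪ V2 := by
      rw [hSdef, hV0, hV2, Finset.filter_or]
    have hScard : S.card = a + c := by
      rw [hSeq, Finset.card_union_of_disjoint, ha, hc]
      rw [Finset.disjoint_left]
      intro x hx hx'
      simp only [hV0, hV2, Finset.mem_filter] at hx hx'
      omega
    have hSne : S.Nonempty := by
      obtain ⟨v, hv⟩ := Finset.card_pos.1 (by omega : 0 < c)
      exact ⟨v, by rw [hSeq]; exact Finset.mem_union_right _ hv⟩
    have hPr : ∀ u v, P u v → T.Adj u v ∧ u ∈ S ∧ v ∈ S := by
      rintro u v ⟨hadj, hcase⟩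
      refine ⟨hadj, ?_, ?_⟩ <;> simp only [hSdef, Finset.mem_filter, Finset.mem_univ, true_and]
      · rcases hcase with ⟨h1, -⟩ | ⟨h1, -⟩ | ⟨h1, -⟩
        · exact Or.inl h1
        · exact Or.inl h1
        · exact Or.inr h1
      · rcases hcase with ⟨-, h1⟩ | ⟨-, h1⟩ | ⟨-, h1⟩
        · exact Or.inl h1
        · exact Or.inr h1
        · exact Or.inl h1
    have hbound := tree_pair_bound hT P S hSne hPr
    rw [hScard] at hbound
    have hcps := card_pairs_eq_sum P
    have hpart := sum_partition' (univ : Finset V) f hf2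
      (fun v => (univ.filter fun u => P v u).card)
    rw [← hV0, ← hV1, ← hV2] at hpart
    have e0 : ∑ v ∈ V0, (univ.filter fun u => P v u).card = P00 + P02 := by
      rw [hP00d, hP02d, ← Finset.sum_add_distrib]
      refine Finset.sum_congr rfl fun v hv => ?_
      have hv0 : f v = 0 := (Finset.mem_filter.1 hv).2
      have hsplit : (univ.filter fun u => P v u)
          = (univ.filter fun u => T.Adj v u ∧ f u = 0)
            ∪ (univ.filter fun u => T.Adj v u ∧ f u = 2) := by
        ext u
        simp only [Finset.mem_filter, Finset.mem_univ, true_and, Finset.mem_union, hPdef]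
        constructor
        · rintro ⟨hadj, hcase⟩
          rcases hcase with ⟨-, h1⟩ | ⟨-, h1⟩ | ⟨h1, -⟩
          · exact Or.inl ⟨hadj, h1⟩
          · exact Or.inr ⟨hadj, h1⟩
          · omega
        · rintro (⟨hadj, h1⟩ | ⟨hadj, h1⟩)
          · exact ⟨hadj, Or.inl ⟨hv0, h1⟩⟩
          · exact ⟨hadj, Or.inr (Or.inl ⟨hv0, h1⟩)⟩
      rw [hsplit, Finset.card_union_of_disjoint, hn0d, hn2d]
      rw [Finset.disjoint_left]
      intro x hx hx'
      simp only [Finset.mem_filter] at hx hx'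
      omega
    have e1 : ∑ v ∈ V1, (univ.filter fun u => P v u).card = 0 := by
      refine Finset.sum_eq_zero fun v hv => ?_
      have hv1 : f v = 1 := (Finset.mem_filter.1 hv).2
      simp only [Finset.card_eq_zero, Finset.filter_eq_empty_iff]
      rintro u - ⟨-, hcase⟩
      rcases hcase with ⟨h1, -⟩ | ⟨h1, -⟩ | ⟨h1, -⟩ <;> omega
    have e2 : ∑ v ∈ V2, (univ.filter fun u => P v u).card = P02 := by
      rw [← hsw2]
      refine Finset.sum_congr rfl fun v hv => ?_
      have hv2 : f v = 2 := (Finset.mem_filter.1 hv).2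
      rw [hn0d]
      congr 1
      ext u
      simp only [Finset.mem_filter, Finset.mem_univ, true_and, hPdef]
      constructor
      · rintro ⟨hadj, hcase⟩
        rcases hcase with ⟨h1, -⟩ | ⟨h1, -⟩ | ⟨-, h1⟩ <;> first | omega | exact ⟨hadj, h1⟩
      · rintro ⟨hadj, h1⟩
        exact ⟨hadj, Or.inr (Or.inr ⟨hv2, h1⟩)⟩
    beta_reduce at hpart
    rw [e0, e1, e2] at hpart
    have hbound2 : (∑ v : V, (univ.filter fun u => P v u).card) + 2 ≤ 2 * (a + c) := by
      rw [hcps] at hbound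
      convert hbound using 3 <;> congr!
    rw [hpart] at hbound2
    omega
  -- final arithmetic
  by_cases hc1 : 1 ≤ c
  · exfalso
    have := hiv hc1
    rw [hw] at htight
    omega
  · have hc0 : c = 0 := by omega
    have := hP02z hc0
    rw [hw] at htight
    omega

theorem tight_case {T : SimpleGraph V} (hT : T.IsTree)
    (f : V → ℕ) (hf : IsRIDF T f)
    (hA : (univ.filter fun v => f v = 0).card = 2)
    (hB : (univ.filter fun v => f v = 1).card = 4)
    (hC : (univ.filter fun v => f v = 2).card = 0) :
    Nonempty (T ≃g doubleStar22) := by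
  classical
  obtain ⟨hf2, hfdom, hfres⟩ := hf
  have hCe : (univ.filter fun v => f v = 2) = ∅ := Finset.card_eq_zero.1 hC
  have hfne2 : ∀ v, f v ≠ 2 := by
    intro v hv
    have : v ∈ univ.filter fun v => f v = 2 := by simp [hv]
    simp [hCe] at this
  -- card V = 6
  have hn6 : Fintype.card V = 6 := by
    have h := sum_partition' (univ : Finset V) f hf2 (fun _ => 1)
    simp only [Finset.sum_const, smul_eq_mul, mul_one, Finset.card_univ] at h
    rw [h, hA, hB, hC]
  -- V0 = {x, y}
  obtain ⟨x, y, hxy, hV0⟩ := Finset.card_eq_two.1 hA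
  have hfx : f x = 0 := by
    have : x ∈ univ.filter fun v => f v = 0 := by rw [hV0]; simp
    exact (Finset.mem_filter.1 this).2
  have hfy : f y = 0 := by
    have : y ∈ univ.filter fun v => f v = 0 := by rw [hV0]; simp
    exact (Finset.mem_filter.1 this).2
  have hmemV0 : ∀ v, f v = 0 → (v = x ∨ v = y) := by
    intro v hv
    have : v ∈ univ.filter fun v => f v = 0 := by simp [hv]
    rw [hV0] at this
    simpa using this
  -- x ~ y
  have hadjxy : T.Adj x y := by
    obtain ⟨u, hu, hu0⟩ := hfres x hfx
    rcases hmemV0 u hu0 with rfl | rfl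
    · exact absurd hu (T.irrefl)
    · exact hu
  -- degree machinery
  have hdegsplit : ∀ v, (univ.filter fun u => T.Adj v u).card
      = (univ.filter fun u => T.Adj v u ∧ f u = 0).card
        + (univ.filter fun u => T.Adj v u ∧ f u = 1).card := by
    intro v
    have h := sum_partition' (univ.filter fun u => T.Adj v u) f hf2 (fun _ => 1)
    rw [Finset.filter_filter, Finset.filter_filter, Finset.filter_filter] at h
    simp only [Finset.sum_const, smul_eq_mul, mul_one] at h
    have h2 : (univ.filter fun u => T.Adj v u ∧ f u = 2).card = 0 := by
      simp only [Finset.card_eq_zero, Finset.filter_eq_empty_iff]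
      rintro u - ⟨-, hu2⟩
      exact hfne2 u hu2
    omega
  have hedges : ∑ v, (univ.filter fun u => T.Adj v u).card = 10 := by
    have h1 := card_pairs_eq_sum (fun v u => T.Adj v u)
    have h2 := T.two_mul_card_edgeFinset
    have h3 := hT.card_edgeFinset
    have h4 : ((univ ×ˢ univ).filter fun z : V × V => T.Adj z.1 z.2).card
        = (univ.filter fun (x, y) => T.Adj x y).card := by
      rw [Finset.univ_product_univ]
    rw [← h1, h4, ← h2]
    omega
  -- lower bounds for x and y
  have hn1 : ∀ v, f v = 0 → 2 ≤ (univ.filter fun u => T.Adj v u ∧ f u = 1).card := by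
    intro v hv
    have h2 := hfdom v hv
    have hsplit := sum_partition' (univ.filter fun u => T.Adj v u) f hf2 f
    rw [Finset.filter_filter, Finset.filter_filter, Finset.filter_filter] at hsplit
    have e0 : ∑ u ∈ univ.filter (fun u => T.Adj v u ∧ f u = 0), f u = 0 :=
      Finset.sum_eq_zero fun u hu => (Finset.mem_filter.1 hu).2.2
    have e1 : ∑ u ∈ univ.filter (fun u => T.Adj v u ∧ f u = 1), f u
        = (univ.filter fun u => T.Adj v u ∧ f u = 1).card := by
      rw [Finset.card_eq_sum_ones]
      exact Finset.sum_congr rfl fun u hu => (Finset.mem_filter.1 hu).2.2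
    have e2 : (univ.filter fun u => T.Adj v u ∧ f u = 2) = ∅ := by
      rw [Finset.filter_eq_empty_iff]
      rintro u - ⟨-, hu2⟩
      exact hfne2 u hu2
    rw [hsplit, e0, e1, e2] at h2
    simpa using h2
  have hn0 : ∀ v, f v = 0 → 1 ≤ (univ.filter fun u => T.Adj v u ∧ f u = 0).card := by
    intro v hv
    obtain ⟨u, hu, hu0⟩ := hfres v hv
    exact Finset.card_pos.2 ⟨u, by simp [hu, hu0]⟩
  have hdx : 3 ≤ (univ.filter fun u => T.Adj x u).card := by
    have := hdegsplit x; have := hn1 x hfx; have := hn0 x hfx; omega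
  have hdy : 3 ≤ (univ.filter fun u => T.Adj y u).card := by
    have := hdegsplit y; have := hn1 y hfy; have := hn0 y hfy; omega
  -- every vertex has a neighbor
  have hd1 : ∀ v, 1 ≤ (univ.filter fun u => T.Adj v u).card := by
    intro v
    have h2 : ∃ w : V, w ≠ v := by
      have : 1 < Fintype.card V := by omega
      obtain ⟨w, hw⟩ := Fintype.exists_ne_of_one_lt_card this v
      exact ⟨w, hw⟩
    obtain ⟨w, hw⟩ := h2
    obtain ⟨p⟩ := hT.isConnected.preconnected v w
    cases p with
    | nil => exact absurd rfl hw.symm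
    | cons h q => exact Finset.card_pos.2 ⟨_, Finset.mem_filter.2 ⟨Finset.mem_univ _, h⟩⟩
  -- degree sums over the partition
  have hpart := sum_partition' (univ : Finset V) f hf2 (fun v => (univ.filter fun u => T.Adj v u).card)
  beta_reduce at hpart
  have hsum0 : ∑ v ∈ univ.filter (fun v => f v = 0), (univ.filter fun u => T.Adj v u).card
      = (univ.filter fun u => T.Adj x u).card + (univ.filter fun u => T.Adj y u).card := by
    rw [hV0, Finset.sum_pair hxy]
  have hsum2 : ∑ v ∈ univ.filter (fun v => f v = 2), (univ.filter fun u => T.Adj v u).card = 0 := by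
    rw [hCe]; simp
  have hsum1_ge : 4 ≤ ∑ v ∈ univ.filter (fun v => f v = 1), (univ.filter fun u => T.Adj v u).card := by
    calc (4 : ℕ) = ∑ _v ∈ univ.filter (fun v => f v = 1), 1 := by
          rw [Finset.sum_const, smul_eq_mul, mul_one, hB]
      _ ≤ _ := Finset.sum_le_sum fun v _ => hd1 v
  rw [hedges, hsum0, hsum2] at hpart
  have hDx3 : (univ.filter fun u => T.Adj x u).card = 3 := by omega
  have hDy3 : (univ.filter fun u => T.Adj y u).card = 3 := by omega
  have hsum1 : ∑ v ∈ univ.filter (fun v => f v = 1), (univ.filter fun u => T.Adj v u).card = 4 := by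
    omega
  have hdeg1 : ∀ v, f v = 1 → (univ.filter fun u => T.Adj v u).card = 1 := by
    have hle : ∀ v ∈ univ.filter (fun v => f v = 1),
        (fun _ => (1 : ℕ)) v ≤ (univ.filter fun u => T.Adj v u).card := fun v _ => hd1 v
    have heq : ∑ v ∈ univ.filter (fun v => f v = 1), (1 : ℕ)
        = ∑ v ∈ univ.filter (fun v => f v = 1), (univ.filter fun u => T.Adj v u).card := by
      rw [hsum1, Finset.sum_const, smul_eq_mul, mul_one, hB]
    have h := (Finset.sum_eq_sum_iff_of_le hle).1 heq
    intro v hv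
    exact (h v (by simp [hv])).symm
  -- neighborhoods of x and y
  have hnx : (univ.filter fun u => T.Adj x u ∧ f u = 1).card = 2 := by
    have h1 := hdegsplit x; have h2 := hn0 x hfx; have h3 := hn1 x hfx; omega
  have hny : (univ.filter fun u => T.Adj y u ∧ f u = 1).card = 2 := by
    have h1 := hdegsplit y; have h2 := hn0 y hfy; have h3 := hn1 y hfy; omega
  obtain ⟨u1, u2, h12, hSx⟩ := Finset.card_eq_two.1 hnx
  obtain ⟨u3, u4, h34, hSy⟩ := Finset.card_eq_two.1 hny
  have hu1 : T.Adj x u1 ∧ f u1 = 1 := by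
    have : u1 ∈ univ.filter fun u => T.Adj x u ∧ f u = 1 := by rw [hSx]; simp
    exact (Finset.mem_filter.1 this).2
  have hu2 : T.Adj x u2 ∧ f u2 = 1 := by
    have : u2 ∈ univ.filter fun u => T.Adj x u ∧ f u = 1 := by rw [hSx]; simp
    exact (Finset.mem_filter.1 this).2
  have hu3 : T.Adj y u3 ∧ f u3 = 1 := by
    have : u3 ∈ univ.filter fun u => T.Adj y u ∧ f u = 1 := by rw [hSy]; simp
    exact (Finset.mem_filter.1 this).2
  have hu4 : T.Adj y u4 ∧ f u4 = 1 := by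
    have : u4 ∈ univ.filter fun u => T.Adj y u ∧ f u = 1 := by rw [hSy]; simp
    exact (Finset.mem_filter.1 this).2
  -- basic distinctness from f-values
  have hxu1 : x ≠ u1 := fun h => by rw [← h, hfx] at hu1; exact absurd hu1.2 (by omega)
  have hxu2 : x ≠ u2 := fun h => by rw [← h, hfx] at hu2; exact absurd hu2.2 (by omega)
  have hxu3 : x ≠ u3 := fun h => by rw [← h, hfx] at hu3; exact absurd hu3.2 (by omega)
  have hxu4 : x ≠ u4 := fun h => by rw [← h, hfx] at hu4; exact absurd hu4.2 (by omega)
  have hyu1 : y ≠ u1 := fun h => by rw [← h, hfy] at hu1; exact absurd hu1.2 (by omega)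
  have hyu2 : y ≠ u2 := fun h => by rw [← h, hfy] at hu2; exact absurd hu2.2 (by omega)
  have hyu3 : y ≠ u3 := fun h => by rw [← h, hfy] at hu3; exact absurd hu3.2 (by omega)
  have hyu4 : y ≠ u4 := fun h => by rw [← h, hfy] at hu4; exact absurd hu4.2 (by omega)
  -- full neighborhoods
  have hNx : (univ.filter fun u => T.Adj x u) = {y, u1, u2} := by
    refine (Finset.eq_of_subset_of_card_le ?_ ?_).symm
    · intro q hq
      simp only [Finset.mem_insert, Finset.mem_singleton] at hq
      rcases hq with rfl | rfl | rfl
      · exact Finset.mem_filter.2 ⟨Finset.mem_univ _, hadjxy⟩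
      · exact Finset.mem_filter.2 ⟨Finset.mem_univ _, hu1.1⟩
      · exact Finset.mem_filter.2 ⟨Finset.mem_univ _, hu2.1⟩
    · rw [hDx3]
      rw [Finset.card_insert_of_notMem (by simp [hyu1, hyu2]), Finset.card_pair h12]
  have hNy : (univ.filter fun u => T.Adj y u) = {x, u3, u4} := by
    refine (Finset.eq_of_subset_of_card_le ?_ ?_).symm
    · intro q hq
      simp only [Finset.mem_insert, Finset.mem_singleton] at hq
      rcases hq with rfl | rfl | rfl
      · exact Finset.mem_filter.2 ⟨Finset.mem_univ _, hadjxy.symm⟩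
      · exact Finset.mem_filter.2 ⟨Finset.mem_univ _, hu3.1⟩
      · exact Finset.mem_filter.2 ⟨Finset.mem_univ _, hu4.1⟩
    · rw [hDy3]
      rw [Finset.card_insert_of_notMem (by simp [hxu3, hxu4]), Finset.card_pair h34]
  have hNu1 : (univ.filter fun u => T.Adj u1 u) = {x} := by
    refine (Finset.eq_of_subset_of_card_le ?_ ?_).symm
    · intro q hq
      simp only [Finset.mem_singleton] at hq
      subst hq
      exact Finset.mem_filter.2 ⟨Finset.mem_univ _, hu1.1.symm⟩
    · rw [hdeg1 u1 hu1.2, Finset.card_singleton]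
  have hNu2 : (univ.filter fun u => T.Adj u2 u) = {x} := by
    refine (Finset.eq_of_subset_of_card_le ?_ ?_).symm
    · intro q hq
      simp only [Finset.mem_singleton] at hq
      subst hq
      exact Finset.mem_filter.2 ⟨Finset.mem_univ _, hu2.1.symm⟩
    · rw [hdeg1 u2 hu2.2, Finset.card_singleton]
  have hNu3 : (univ.filter fun u => T.Adj u3 u) = {y} := by
    refine (Finset.eq_of_subset_of_card_le ?_ ?_).symm
    · intro q hq
      simp only [Finset.mem_singleton] at hq
      subst hq
      exact Finset.mem_filter.2 ⟨Finset.mem_univ _, hu3.1.symm⟩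
    · rw [hdeg1 u3 hu3.2, Finset.card_singleton]
  have hNu4 : (univ.filter fun u => T.Adj u4 u) = {y} := by
    refine (Finset.eq_of_subset_of_card_le ?_ ?_).symm
    · intro q hq
      simp only [Finset.mem_singleton] at hq
      subst hq
      exact Finset.mem_filter.2 ⟨Finset.mem_univ _, hu4.1.symm⟩
    · rw [hdeg1 u4 hu4.2, Finset.card_singleton]
  -- cross distinctness
  have hcross : ∀ w, T.Adj y w → w ≠ u1 ∧ w ≠ u2 := by
    intro w hw
    constructor
    · intro hwu
      have : y ∈ univ.filter fun u => T.Adj u1 u :=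
        Finset.mem_filter.2 ⟨Finset.mem_univ _, (hwu ▸ hw).symm⟩
      rw [hNu1] at this
      exact hxy (Finset.mem_singleton.1 this).symm
    · intro hwu
      have : y ∈ univ.filter fun u => T.Adj u2 u :=
        Finset.mem_filter.2 ⟨Finset.mem_univ _, (hwu ▸ hw).symm⟩
      rw [hNu2] at this
      exact hxy (Finset.mem_singleton.1 this).symm
  have h31 : u3 ≠ u1 := (hcross u3 hu3.1).1
  have h32 : u3 ≠ u2 := (hcross u3 hu3.1).2
  have h41 : u4 ≠ u1 := (hcross u4 hu4.1).1
  have h42 : u4 ≠ u2 := (hcross u4 hu4.1).2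
  -- adjacency characterizations
  have hAx : ∀ q, T.Adj x q ↔ (q = y ∨ q = u1 ∨ q = u2) := by
    intro q
    have := Finset.ext_iff.1 hNx q
    simpa using this
  have hAy : ∀ q, T.Adj y q ↔ (q = x ∨ q = u3 ∨ q = u4) := by
    intro q
    have := Finset.ext_iff.1 hNy q
    simpa using this
  have hA1 : ∀ q, T.Adj u1 q ↔ q = x := by
    intro q
    have := Finset.ext_iff.1 hNu1 q
    simpa using this
  have hA2 : ∀ q, T.Adj u2 q ↔ q = x := by
    intro q
    have := Finset.ext_iff.1 hNu2 q
    simpa using this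
  have hA3 : ∀ q, T.Adj u3 q ↔ q = y := by
    intro q
    have := Finset.ext_iff.1 hNu3 q
    simpa using this
  have hA4 : ∀ q, T.Adj u4 q ↔ q = y := by
    intro q
    have := Finset.ext_iff.1 hNu4 q
    simpa using this
  -- build the isomorphism
  set m : Fin 6 → V := fun i =>
    if i = 0 then x else if i = 1 then y else if i = 2 then u1
    else if i = 3 then u2 else if i = 4 then u3 else u4 with hm
  have hm0 : m 0 = x := by simp [hm]
  have hm1 : m 1 = y := by simp [hm]
  have hm2 : m 2 = u1 := by simp [hm]
  have hm3 : m 3 = u2 := by simp [hm]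
  have hm4 : m 4 = u3 := by simp [hm]
  have hm5 : m 5 = u4 := by simp [hm]
  have hV1eq : (univ.filter fun v => f v = 1) = {u1, u2, u3, u4} := by
    refine (Finset.eq_of_subset_of_card_le ?_ ?_).symm
    · intro q hq
      simp only [Finset.mem_insert, Finset.mem_singleton] at hq
      rcases hq with rfl | rfl | rfl | rfl
      · simp [hu1.2]
      · simp [hu2.2]
      · simp [hu3.2]
      · simp [hu4.2]
    · rw [hB]
      rw [Finset.card_insert_of_notMem (by simp [h12, h31.symm, h41.symm]),
        Finset.card_insert_of_notMem (by simp [h32.symm, h42.symm]),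
        Finset.card_pair h34]
  have hmsurj : Function.Surjective m := by
    intro v
    have hv2 := hfne2 v
    have hv := hf2 v
    rcases (by omega : f v = 0 ∨ f v = 1) with hv0 | hv1
    · rcases hmemV0 v hv0 with rfl | rfl
      · exact ⟨0, hm0⟩
      · exact ⟨1, hm1⟩
    · have : v ∈ (univ.filter fun v => f v = 1) := by simp [hv1]
      rw [hV1eq] at this
      simp only [Finset.mem_insert, Finset.mem_singleton] at this
      rcases this with rfl | rfl | rfl | rfl
      · exact ⟨2, hm2⟩
      · exact ⟨3, hm3⟩
      · exact ⟨4, hm4⟩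
      · exact ⟨5, hm5⟩
  have hmbij : Function.Bijective m :=
    (Fintype.bijective_iff_surjective_and_card m).2 ⟨hmsurj, by rw [hn6]; rfl⟩
  set e := Equiv.ofBijective m hmbij with he
  refine ⟨⟨e.symm, ?_⟩⟩
  intro a b
  obtain ⟨i, rfl⟩ : ∃ i, m i = a := ⟨e.symm a, e.apply_symm_apply a⟩
  obtain ⟨j, rfl⟩ : ∃ j, m j = b := ⟨e.symm b, e.apply_symm_apply b⟩
  have hei : ∀ k, e.symm (m k) = k := fun k => e.symm_apply_apply k
  rw [hei, hei]
  fin_cases i <;> fin_cases j <;>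
    simp [hm0, hm1, hm2, hm3, hm4, hm5, doubleStar22, SimpleGraph.fromRel_adj, hAx, hAy, hA1, hA2, hA3, hA4,
      hxy, hxu1, hxu2, hxu3, hxu4, hyu1, hyu2, hyu3, hyu4, h12, h34, h31, h32, h41, h42,
      hxy.symm, hxu1.symm, hxu2.symm, hxu3.symm, hxu4.symm,
      hyu1.symm, hyu2.symm, hyu3.symm, hyu4.symm, h12.symm, h34.symm,
      h31.symm, h32.symm, h41.symm, h42.symm, hadjxy]


end RIDaux

theorem stmt4 {V : Type*} [Fintype V] (T : SimpleGraph V) (hT : T.IsTree)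
    (hn : 3 ≤ Fintype.card V) (hns : ¬ Nonempty (T ≃g doubleStar22)) :
    ((Fintype.card V : ℚ) + 3) / 2 ≤ (ridNum T : ℚ) := by
  classical
  have hne : Set.Nonempty {w | ∃ f : V → ℕ, IsRIDF T f ∧ ∑ v, f v = w} := by
    refine ⟨Fintype.card V, fun _ => 1, ⟨fun v => by norm_num, fun v h => absurd h one_ne_zero,
      fun v h => absurd h one_ne_zero⟩, by simp⟩
  have hmem : ridNum T ∈ {w | ∃ f : V → ℕ, IsRIDF T f ∧ ∑ v, f v = w} := Nat.sInf_mem hne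
  obtain ⟨f, hf, hsum⟩ := hmem
  have hkey : Fintype.card V + 3 ≤ 2 * ridNum T := by
    by_contra htight
    have htight' : ¬ (Fintype.card V + 3 ≤ 2 * ∑ v, f v) := by rw [hsum]; exact htight
    obtain ⟨hA, hB, hC⟩ := RIDaux.main_count hT hn f hf htight'
    exact hns (RIDaux.tight_case hT f hf hA hB hC)
  rw [div_le_iff₀ (by norm_num : (0:ℚ) < 2)]
  have : ((Fintype.card V + 3 : ℕ) : ℚ) ≤ ((2 * ridNum T : ℕ) : ℚ) := by exact_mod_cast hkey
  push_cast at this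
  linarith
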